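/- Let p be a prime and n ≥ 1. Let W_p^n be the set of words a_1…a_n over the alphabet {0,1,…,p^2−1} for which there exist indices 1 ≤ j < k ≤ n+1 (k = n+1 allowed) with: a_i = 0 for i < j; a_j = 1; a_i ∈ {0,…,p−1} for j < i < k; if k ≤ n then a_k ∈ {p, 2p, …, (p−1)p}; and a_i ∈ {0,…,p^2−1} arbitrary for i > k. Together with the all-zero word, the set {0-word} ∪ W_p^n is in bijection with the set of orbits of SL(2, ZMod p) acting by left multiplication on 2×n matrices over ZMod p. -/

import Mathlib

/-- The orbit of a `2 × n` matrix over `ZMod p` under left multiplication by `SL(2, ZMod p)`. -/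
def slOrbit (p n : ℕ) (M : Matrix (Fin 2) (Fin n) (ZMod p)) :
    Set (Matrix (Fin 2) (Fin n) (ZMod p)) :=
  { N | ∃ S : Matrix.SpecialLinearGroup (Fin 2) (ZMod p),
      (S : Matrix (Fin 2) (Fin 2) (ZMod p)) * M = N }

/-- The defining condition of the language `W_p^n` (0-based indices; `k = n` means that
no letter of the form `(R4)` occurs within the word). -/
def IsWordP (p n : ℕ) (a : Fin n → Fin (p ^ 2)) : Prop :=
  ∃ j k : ℕ, j < k ∧ k ≤ n ∧ ∃ hj : j < n,
    (∀ i : Fin n, (i : ℕ) < j → (a i : ℕ) = 0) ∧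
    (a ⟨j, hj⟩ : ℕ) = 1 ∧
    (∀ i : Fin n, j < (i : ℕ) → (i : ℕ) < k → (a i : ℕ) < p) ∧
    (∀ hk : k < n, ∃ m : ℕ, 1 ≤ m ∧ m < p ∧ (a ⟨k, hk⟩ : ℕ) = m * p)

/-- The `2 × n` matrix over `ZMod p` associated to a word: the `i`-th letter `a i = u + v·p`
is sent to the column `(u, v)ᵗ`. -/
def wordMatrix (p n : ℕ) (a : Fin n → Fin (p ^ 2)) : Matrix (Fin 2) (Fin n) (ZMod p) :=
  Matrix.of fun i j => if i = 0 then ((a j : ℕ) % p : ZMod p) else ((a j : ℕ) / p : ZMod p)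

namespace WB

variable {p n : ℕ}

lemma fin2 (i : Fin 2) : i = 0 ∨ i = 1 := by revert i; decide

/-- The normal-form condition on matrices corresponding to `IsWordP`. -/
def IsNormal (p n : ℕ) (M : Matrix (Fin 2) (Fin n) (ZMod p)) : Prop :=
  (∀ i, M 0 i = 0 ∧ M 1 i = 0) ∨
  ∃ j k : ℕ, j < k ∧ k ≤ n ∧ ∃ hj : j < n,
    (∀ i : Fin n, (i : ℕ) < j → M 0 i = 0 ∧ M 1 i = 0) ∧
    (M 0 ⟨j, hj⟩ = 1 ∧ M 1 ⟨j, hj⟩ = 0) ∧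
    (∀ i : Fin n, j < (i : ℕ) → (i : ℕ) < k → M 1 i = 0) ∧
    (∀ hk : k < n, M 0 ⟨k, hk⟩ = 0 ∧ M 1 ⟨k, hk⟩ ≠ 0)

lemma mul_apply_two (S : Matrix (Fin 2) (Fin 2) (ZMod p)) (M : Matrix (Fin 2) (Fin n) (ZMod p))
    (i : Fin 2) (j : Fin n) :
    (S * M) i j = S i 0 * M 0 j + S i 1 * M 1 j := by
  simp [Matrix.mul_apply, Fin.sum_univ_two]

@[simp] lemma wordMatrix_apply_zero (a : Fin n → Fin (p ^ 2)) (j : Fin n) :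
    wordMatrix p n a 0 j = ((a j : ℕ) % p : ℕ) := rfl

@[simp] lemma wordMatrix_apply_one (a : Fin n → Fin (p ^ 2)) (j : Fin n) :
    wordMatrix p n a 1 j = ((a j : ℕ) / p : ℕ) := rfl

/-- The word associated to a matrix. -/
def matWord (hp : p.Prime) (M : Matrix (Fin 2) (Fin n) (ZMod p)) : Fin n → Fin (p ^ 2) :=
  haveI := Fact.mk hp
  fun i => ⟨(M 0 i).val + (M 1 i).val * p, by
    have h0 : (M 0 i).val < p := ZMod.val_lt _
    have h1 : (M 1 i).val < p := ZMod.val_lt _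
    have : p ^ 2 = p * p := by ring
    nlinarith⟩

lemma matWord_val (hp : p.Prime) (M : Matrix (Fin 2) (Fin n) (ZMod p)) (i : Fin n) :
    haveI := Fact.mk hp
    ((matWord hp M) i : ℕ) = (M 0 i).val + (M 1 i).val * p := rfl

lemma wordMatrix_matWord (hp : p.Prime) (M : Matrix (Fin 2) (Fin n) (ZMod p)) :
    wordMatrix p n (matWord hp M) = M := by
  haveI := Fact.mk hp
  ext i j
  have h0 : (M 0 j).val < p := ZMod.val_lt _
  rcases fin2 i with rfl | rfl
  · rw [wordMatrix_apply_zero, matWord_val, Nat.add_mul_mod_self_right, Nat.mod_eq_of_lt h0,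
      ZMod.natCast_rightInverse]
  · rw [wordMatrix_apply_one, matWord_val, Nat.add_mul_div_right _ _ hp.pos,
      Nat.div_eq_of_lt h0, Nat.zero_add, ZMod.natCast_rightInverse]

lemma matWord_wordMatrix (hp : p.Prime) (a : Fin n → Fin (p ^ 2)) :
    matWord hp (wordMatrix p n a) = a := by
  haveI := Fact.mk hp
  funext i
  apply Fin.ext
  rw [matWord_val, wordMatrix_apply_zero, wordMatrix_apply_one,
    ZMod.val_cast_of_lt (Nat.mod_lt _ hp.pos),
    ZMod.val_cast_of_lt (by
      have := (a i).2
      have hpp : p ^ 2 = p * p := by ring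
      exact Nat.div_lt_of_lt_mul (hpp ▸ this)),
    Nat.mod_add_div']

lemma isNormal_wordMatrix (hp : p.Prime) (a : Fin n → Fin (p ^ 2))
    (ha : (∀ i, (a i : ℕ) = 0) ∨ IsWordP p n a) : IsNormal p n (wordMatrix p n a) := by
  haveI := Fact.mk hp
  rcases ha with ha | ⟨j, k, hjk, hkn, hj, h1, h2, h3, h4⟩
  · left
    intro i
    simp [ha i]
  · right
    refine ⟨j, k, hjk, hkn, hj, ?_, ?_, ?_, ?_⟩
    · intro i hi; simp [h1 i hi]
    · constructor
      · rw [wordMatrix_apply_zero, h2, Nat.mod_eq_of_lt hp.one_lt, Nat.cast_one]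
      · rw [wordMatrix_apply_one, h2, Nat.div_eq_of_lt hp.one_lt, Nat.cast_zero]
    · intro i hji hik
      rw [wordMatrix_apply_one, Nat.div_eq_of_lt (h3 i hji hik), Nat.cast_zero]
    · intro hk
      obtain ⟨m, hm1, hmp, hm⟩ := h4 hk
      constructor
      · rw [wordMatrix_apply_zero, hm, Nat.mul_mod_left, Nat.cast_zero]
      · rw [wordMatrix_apply_one, hm, Nat.mul_div_cancel m hp.pos]
        intro h
        rw [ZMod.natCast_eq_zero_iff] at h
        exact absurd (Nat.le_of_dvd (by omega) h) (by omega)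

lemma cond_matWord (hp : p.Prime) (M : Matrix (Fin 2) (Fin n) (ZMod p))
    (hM : IsNormal p n M) :
    (∀ i, ((matWord hp M) i : ℕ) = 0) ∨ IsWordP p n (matWord hp M) := by
  haveI := Fact.mk hp
  haveI : Fact (1 < p) := Fact.mk hp.one_lt
  rcases hM with hM | ⟨j, k, hjk, hkn, hj, h1, h2, h3, h4⟩
  · left
    intro i
    rw [matWord_val, (hM i).1, (hM i).2, ZMod.val_zero]
    omega
  · right
    refine ⟨j, k, hjk, hkn, hj, ?_, ?_, ?_, ?_⟩
    · intro i hi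
      rw [matWord_val, (h1 i hi).1, (h1 i hi).2, ZMod.val_zero]
      omega
    · rw [matWord_val, h2.1, h2.2, ZMod.val_one, ZMod.val_zero]
      omega
    · intro i hji hik
      rw [matWord_val, h3 i hji hik, ZMod.val_zero]
      simpa using ZMod.val_lt (M 0 i)
    · intro hk
      refine ⟨(M 1 ⟨k, hk⟩).val, ?_, ZMod.val_lt _, ?_⟩
      · have h5 := (h4 hk).2
        have h6 : (M 1 ⟨k, hk⟩).val ≠ 0 := fun h => h5 (by rwa [ZMod.val_eq_zero] at h)
        omega
      · rw [matWord_val, (h4 hk).1, ZMod.val_zero]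
        omega

lemma slOrbit_smul (S : Matrix.SpecialLinearGroup (Fin 2) (ZMod p))
    (M : Matrix (Fin 2) (Fin n) (ZMod p)) :
    slOrbit p n ((S : Matrix (Fin 2) (Fin 2) (ZMod p)) * M) = slOrbit p n M := by
  have key : ∀ (A B : Matrix.SpecialLinearGroup (Fin 2) (ZMod p))
      (X : Matrix (Fin 2) (Fin n) (ZMod p)),
      (A : Matrix (Fin 2) (Fin 2) (ZMod p)) * ((B : Matrix (Fin 2) (Fin 2) (ZMod p)) * X)
        = ((A * B : _) : Matrix (Fin 2) (Fin 2) (ZMod p)) * X := by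
    intro A B X
    rw [Matrix.SpecialLinearGroup.coe_mul, Matrix.mul_assoc]
  ext X
  constructor
  · rintro ⟨T, rfl⟩
    exact ⟨T * S, by rw [key]⟩
  · rintro ⟨T, rfl⟩
    refine ⟨T * S⁻¹, ?_⟩
    rw [key, mul_assoc, inv_mul_cancel, mul_one]

/-- Existence of a normal form in each orbit. -/
lemma exists_normal (hp : p.Prime) (M : Matrix (Fin 2) (Fin n) (ZMod p)) :
    ∃ S : Matrix.SpecialLinearGroup (Fin 2) (ZMod p),
      IsNormal p n ((S : Matrix (Fin 2) (Fin 2) (ZMod p)) * M) := by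
  classical
  haveI := Fact.mk hp
  by_cases hM : ∀ i, M 0 i = 0 ∧ M 1 i = 0
  · refine ⟨1, Or.inl ?_⟩
    intro i
    simp [mul_apply_two, (hM i).1, (hM i).2]
  · push_neg at hM
    obtain ⟨i0, hi0⟩ := hM
    have hex : ∃ j : ℕ, ∃ h : j < n, ¬(M 0 ⟨j, h⟩ = 0 ∧ M 1 ⟨j, h⟩ = 0) :=
      ⟨i0, i0.2, fun h => hi0 h.1 h.2⟩
    set j := Nat.find hex with hjdef
    obtain ⟨hj, hcolj⟩ := Nat.find_spec hex
    have hjmin : ∀ i : Fin n, (i : ℕ) < j → M 0 i = 0 ∧ M 1 i = 0 := by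
      intro i hi
      have h2 := Nat.find_min hex hi
      push_neg at h2
      simpa using h2 i.2
    -- the first SL2 matrix, sending column j to e1
    have hxy : ¬(M 0 ⟨j, hj⟩ = 0 ∧ M 1 ⟨j, hj⟩ = 0) := hcolj
    set x := M 0 ⟨j, hj⟩
    set y := M 1 ⟨j, hj⟩
    obtain ⟨S1, hS1a, hS1b⟩ :
        ∃ S1 : Matrix.SpecialLinearGroup (Fin 2) (ZMod p),
          (S1 : Matrix (Fin 2) (Fin 2) (ZMod p)) 0 0 * x
            + (S1 : Matrix (Fin 2) (Fin 2) (ZMod p)) 0 1 * y = 1 ∧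
          (S1 : Matrix (Fin 2) (Fin 2) (ZMod p)) 1 0 * x
            + (S1 : Matrix (Fin 2) (Fin 2) (ZMod p)) 1 1 * y = 0 := by
      by_cases hx : x = 0
      · have hy : y ≠ 0 := fun h => hxy ⟨hx, h⟩
        refine ⟨⟨!![0, y⁻¹; -y, x], ?_⟩, ?_, ?_⟩
        · rw [Matrix.det_fin_two_of]
          linear_combination inv_mul_cancel₀ hy
        · show (0 : ZMod p) * x + y⁻¹ * y = 1
          linear_combination inv_mul_cancel₀ hy
        · show -y * x + x * y = 0
          ring
      · refine ⟨⟨!![x⁻¹, 0; -y, x], ?_⟩, ?_, ?_⟩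
        · rw [Matrix.det_fin_two_of]
          linear_combination inv_mul_cancel₀ hx
        · show x⁻¹ * x + (0 : ZMod p) * y = 1
          linear_combination inv_mul_cancel₀ hx
        · show -y * x + x * y = 0
          ring
    set N := (S1 : Matrix (Fin 2) (Fin 2) (ZMod p)) * M with hN
    have hNzero : ∀ i : Fin n, (i : ℕ) < j → N 0 i = 0 ∧ N 1 i = 0 := by
      intro i hi
      rw [hN, mul_apply_two, mul_apply_two, (hjmin i hi).1, (hjmin i hi).2]
      constructor <;> ring
    have hNj0 : N 0 ⟨j, hj⟩ = 1 := by rw [hN, mul_apply_two]; exact hS1a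
    have hNj1 : N 1 ⟨j, hj⟩ = 0 := by rw [hN, mul_apply_two]; exact hS1b
    by_cases hk : ∃ k : ℕ, ∃ h : k < n, j < k ∧ N 1 ⟨k, h⟩ ≠ 0
    · set k := Nat.find hk with hkdef
      obtain ⟨hkn, hjk, hv⟩ := Nat.find_spec hk
      have hkmin : ∀ i : Fin n, j < (i : ℕ) → (i : ℕ) < k → N 1 i = 0 := by
        intro i hji hik
        have h2 := Nat.find_min hk hik
        push_neg at h2
        simpa using h2 i.2 hji
      set u := N 0 ⟨k, hkn⟩
      set v := N 1 ⟨k, hkn⟩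
      set S2 : Matrix.SpecialLinearGroup (Fin 2) (ZMod p) :=
        ⟨!![1, -u / v; 0, 1], by rw [Matrix.det_fin_two_of]; ring⟩ with hS2
      refine ⟨S2 * S1, Or.inr ⟨j, k, hjk, hkn.le, hj, ?_, ?_, ?_, ?_⟩⟩
      all_goals
        rw [Matrix.SpecialLinearGroup.coe_mul, Matrix.mul_assoc, ← hN]
      · intro i hi
        rw [mul_apply_two, mul_apply_two, (hNzero i hi).1, (hNzero i hi).2, hS2]
        constructor <;> simp
      · rw [mul_apply_two, mul_apply_two, hNj0, hNj1, hS2]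
        constructor <;> simp
      · intro i hji hik
        rw [mul_apply_two, hkmin i hji hik, hS2]
        simp
      · intro hkn'
        rw [mul_apply_two, mul_apply_two, hS2]
        show (1 : ZMod p) * u + (-u / v) * v = 0 ∧ (0 : ZMod p) * u + 1 * v ≠ 0
        constructor
        · field_simp
          ring
        · simpa using hv
    · push_neg at hk
      refine ⟨S1, Or.inr ⟨j, n, ?_, le_refl n, hj, hNzero, ⟨hNj0, hNj1⟩, ?_, ?_⟩⟩
      · exact hj
      · intro i hji _
        simpa using hk i i.2 hji
      · intro hkn'
        exact absurd hkn' (lt_irrefl n)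

/-- Uniqueness of the normal form within an orbit. -/
lemma normal_unique (hp : p.Prime) {M N : Matrix (Fin 2) (Fin n) (ZMod p)}
    (hM : IsNormal p n M) (hN : IsNormal p n N)
    (S : Matrix.SpecialLinearGroup (Fin 2) (ZMod p))
    (h : (S : Matrix (Fin 2) (Fin 2) (ZMod p)) * M = N) : M = N := by
  haveI := Fact.mk hp
  have hdet : (S : Matrix (Fin 2) (Fin 2) (ZMod p)) 0 0
        * (S : Matrix (Fin 2) (Fin 2) (ZMod p)) 1 1
      - (S : Matrix (Fin 2) (Fin 2) (ZMod p)) 0 1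
        * (S : Matrix (Fin 2) (Fin 2) (ZMod p)) 1 0 = 1 := by
    have := S.2
    rwa [Matrix.det_fin_two] at this
  have happ : ∀ (i : Fin 2) (l : Fin n),
      N i l = (S : Matrix (Fin 2) (Fin 2) (ZMod p)) i 0 * M 0 l
        + (S : Matrix (Fin 2) (Fin 2) (ZMod p)) i 1 * M 1 l := by
    intro i l
    rw [← h, mul_apply_two]
  -- zero cases
  rcases hM with hM0 | ⟨j, k, hjk, hkn, hj, hm1, hm2, hm3, hm4⟩
  · rcases hN with hN0 | ⟨j', k', hjk', hkn', hj', hn1, hn2, hn3, hn4⟩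
    · ext i l
      rcases fin2 i with rfl | rfl
      · rw [(hM0 l).1, (hN0 l).1]
      · rw [(hM0 l).2, (hN0 l).2]
    · exfalso
      have := hn2.1
      rw [happ, (hM0 ⟨j', hj'⟩).1, (hM0 ⟨j', hj'⟩).2] at this
      simp at this
  · rcases hN with hN0 | ⟨j', k', hjk', hkn', hj', hn1, hn2, hn3, hn4⟩
    · exfalso
      have h0 := (hN0 ⟨j, hj⟩).1
      have h1 := (hN0 ⟨j, hj⟩).2
      rw [happ, hm2.1, hm2.2] at h0 h1
      simp at h0 h1
      have : (1 : ZMod p) = 0 := by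
        calc (1 : ZMod p) = _ - _ := hdet.symm
        _ = 0 := by rw [h0, h1]; ring
      simp at this
  -- both nontrivial
    have hjj : j = j' := by
      rcases lt_trichotomy j j' with hlt | heq | hgt
      · exfalso
        have h0 := (hn1 ⟨j, hj⟩ hlt).1
        have h1 := (hn1 ⟨j, hj⟩ hlt).2
        rw [happ, hm2.1, hm2.2] at h0 h1
        simp at h0 h1
        have : (1 : ZMod p) = 0 := by
          calc (1 : ZMod p) = _ - _ := hdet.symm
          _ = 0 := by rw [h0, h1]; ring
        simp at this
      · exact heq
      · exfalso
        have := hn2.1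
        rw [happ, (hm1 ⟨j', hj'⟩ hgt).1, (hm1 ⟨j', hj'⟩ hgt).2] at this
        simp at this
    subst hjj
    -- S fixes e1
    have hS00 : (S : Matrix (Fin 2) (Fin 2) (ZMod p)) 0 0 = 1 := by
      have := hn2.1
      rw [happ, hm2.1, hm2.2] at this
      simpa using this
    have hS10 : (S : Matrix (Fin 2) (Fin 2) (ZMod p)) 1 0 = 0 := by
      have := hn2.2
      rw [happ, hm2.1, hm2.2] at this
      simpa using this
    have hS11 : (S : Matrix (Fin 2) (Fin 2) (ZMod p)) 1 1 = 1 := by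
      rw [hS00, hS10] at hdet
      calc (S : Matrix (Fin 2) (Fin 2) (ZMod p)) 1 1 = 1 * _ - _ * 0 := by ring
      _ = 1 := hdet
    have hrow1 : ∀ l, N 1 l = M 1 l := by
      intro l
      rw [happ, hS10, hS11]
      ring
    have hrow0 : ∀ l, N 0 l = M 0 l + (S : Matrix (Fin 2) (Fin 2) (ZMod p)) 0 1 * M 1 l := by
      intro l
      rw [happ, hS00]
      ring
    -- k = k'
    have hkk : k = k' := by
      rcases lt_trichotomy k k' with hlt | heq | hgt
      · exfalso
        have hkn2 : k < n := lt_of_lt_of_le hlt hkn'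
        have := (hm4 hkn2).2
        exact this (by rw [← hrow1]; exact hn3 ⟨k, hkn2⟩ hjk hlt)
      · exact heq
      · exfalso
        have hkn2 : k' < n := lt_of_lt_of_le hgt hkn
        have := (hn4 hkn2).2
        exact this (by rw [hrow1]; exact hm3 ⟨k', hkn2⟩ hjk' hgt)
    subst hkk
    -- conclude
    by_cases hkn2 : k < n
    · have hb : (S : Matrix (Fin 2) (Fin 2) (ZMod p)) 0 1 = 0 := by
        have h0 := (hn4 hkn2).1
        rw [hrow0, (hm4 hkn2).1, zero_add] at h0
        have hv := (hm4 hkn2).2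
        exact (mul_eq_zero.mp h0).resolve_right hv
      ext i l
      rcases fin2 i with rfl | rfl
      · rw [hrow0, hb, zero_mul, add_zero]
      · rw [hrow1]
    · -- k = n, so row 1 of M is zero
      have hk_eq : k = n := le_antisymm hkn (not_lt.mp hkn2)
      have hrow1M : ∀ l : Fin n, M 1 l = 0 := by
        intro l
        rcases lt_trichotomy (l : ℕ) j with hlt | heq | hgt
        · exact (hm1 l hlt).2
        · have : l = ⟨j, hj⟩ := Fin.ext heq
          rw [this]; exact hm2.2
        · exact hm3 l hgt (hk_eq ▸ l.2)
      ext i l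
      rcases fin2 i with rfl | rfl
      · rw [hrow0, hrow1M, mul_zero, add_zero]
      · rw [hrow1]

end WB

open WB in
theorem words_biject_orbits (p n : ℕ) (hp : p.Prime) (hn : 1 ≤ n) :
    Function.Bijective
      (fun w : { a : Fin n → Fin (p ^ 2) // (∀ i, (a i : ℕ) = 0) ∨ IsWordP p n a } =>
        (⟨slOrbit p n (wordMatrix p n w.1), ⟨wordMatrix p n w.1, rfl⟩⟩ :
          { O : Set (Matrix (Fin 2) (Fin n) (ZMod p)) // ∃ M, O = slOrbit p n M })) := by
  constructor
  · rintro ⟨a, ha⟩ ⟨b, hb⟩ hab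
    simp only [Subtype.mk.injEq] at hab
    -- wordMatrix b ∈ slOrbit (wordMatrix a)
    have hmem : wordMatrix p n b ∈ slOrbit p n (wordMatrix p n a) := by
      rw [hab]; exact ⟨1, by simp⟩
    obtain ⟨S, hS⟩ := hmem
    have heq : wordMatrix p n a = wordMatrix p n b :=
      normal_unique hp (isNormal_wordMatrix hp a ha) (isNormal_wordMatrix hp b hb) S hS
    have : a = b := by
      have := congrArg (matWord hp) heq
      rwa [matWord_wordMatrix, matWord_wordMatrix] at this
    exact Subtype.ext this
  · rintro ⟨O, M, rfl⟩
    obtain ⟨S, hS⟩ := exists_normal hp M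
    refine ⟨⟨matWord hp ((S : Matrix (Fin 2) (Fin 2) (ZMod p)) * M),
      cond_matWord hp _ hS⟩, ?_⟩
    apply Subtype.ext
    show slOrbit p n (wordMatrix p n (matWord hp _)) = slOrbit p n M
    rw [wordMatrix_matWord, slOrbit_smul]
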